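/- Let J : ℝᵏ → ℝ be convex and differentiable and η > 0, and set F(θ) = J(θ) + η‖θ‖₁. A point θ* is a global minimizer of F if and only if θ* = Ψ_{αη}(θ* − α∇J(θ*)) for every (equivalently, for some) α > 0; i.e., the minimizers of F are exactly the fixed points of the iterative soft thresholding map. -/

import Mathlib

/-- scalar soft thresholding operator -/
noncomputable def softThresh (ν x : ℝ) : ℝ := Real.sign x * max (|x| - ν) 0

/-- componentwise soft thresholding on ℝᵏ -/
noncomputable def softThreshVec {k : ℕ} (ν : ℝ) (x : EuclideanSpace ℝ (Fin k)) :
    EuclideanSpace ℝ (Fin k) := WithLp.toLp 2 (fun i => softThresh ν (x i))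


open InnerProductSpace

lemma grad_ineq {E : Type*} [NormedAddCommGroup E] [InnerProductSpace ℝ E]
    [CompleteSpace E] {J : E → ℝ}
    (hconv : ConvexOn ℝ Set.univ J) (hdiff : Differentiable ℝ J) (x y : E) :
    J x + inner ℝ (gradient J x) (y - x) ≤ J y := by
  set K : ℝ → ℝ := fun t => J (x + t • (y - x)) with hK
  have hKconv : ConvexOn ℝ Set.univ K := by
    have h1 := hconv.comp_affineMap (AffineMap.lineMap x y : ℝ →ᵃ[ℝ] E)
    have h2 : (AffineMap.lineMap x y : ℝ →ᵃ[ℝ] E) ⁻¹' Set.univ = Set.univ := by simp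
    rw [h2] at h1
    rw [show K = J ∘ (AffineMap.lineMap x y : ℝ →ᵃ[ℝ] E) from ?_]
    · exact h1
    funext t
    simp only [hK, Function.comp_apply, AffineMap.lineMap_apply, vsub_eq_sub, vadd_eq_add]
    rw [add_comm]
  have hline : HasDerivAt (fun t : ℝ => x + t • (y - x)) (y - x) 0 := by
    simpa using ((hasDerivAt_id (0:ℝ)).smul_const (y - x)).const_add x
  have hfd : HasFDerivAt J (toDual ℝ E (gradient J x)) x :=
    hasGradientAt_iff_hasFDerivAt.mp (hdiff x).hasGradientAt
  have hKd : HasDerivAt K (inner ℝ (gradient J x) (y - x) : ℝ) 0 := by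
    have h0 : x + (0:ℝ) • (y - x) = x := by simp
    have h1 : HasFDerivAt J ((toDual ℝ E) (gradient J x)) (x + (0:ℝ) • (y - x)) := by
      rw [h0]; exact hfd
    have h2 := h1.comp_hasDerivAt 0 hline
    simpa [toDual_apply_apply, hK, Function.comp_def] using h2
  have hs := hKconv.le_slope_of_hasDerivAt (Set.mem_univ (0:ℝ)) (Set.mem_univ (1:ℝ)) one_pos hKd
  have hsl : slope K 0 1 = K 1 - K 0 := by simp [slope_def_field]
  have hK0 : K 0 = J x := by simp [hK]
  have hK1 : K 1 = J y := by simp [hK]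
  rw [hsl, hK0, hK1] at hs
  linarith



lemma softThresh_fixed_iff {α η x g : ℝ} (hα : 0 < α) (hη : 0 < η) :
    x = softThresh (α * η) (x - α * g) ↔
      ((x ≠ 0 → g = -η * Real.sign x) ∧ (x = 0 → |g| ≤ η)) := by
  have hν : 0 < α * η := mul_pos hα hη
  set y := x - α * g with hy
  unfold softThresh
  constructor
  · intro h
    rcases lt_trichotomy x 0 with hx | hx | hx
    · refine ⟨fun _ => ?_, fun h0 => absurd h0 hx.ne⟩
      rw [Real.sign_of_neg hx, mul_neg_one, neg_neg]
      -- show g = η; first y < 0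
      have hyneg : y < 0 := by
        by_contra hcon
        push_neg at hcon
        rcases eq_or_lt_of_le hcon with h1 | h1
        · rw [← h1, Real.sign_zero, zero_mul] at h
          exact absurd h hx.ne
        · rw [Real.sign_of_pos h1, one_mul] at h
          have := le_max_right (|y| - α * η) 0
          linarith [h ▸ this]
      rw [Real.sign_of_neg hyneg] at h
      have hmax : max (|y| - α * η) 0 = -x := by linarith [h]
      have habs : |y| - α * η = -x := by
        rcases max_cases (|y| - α * η) 0 with ⟨h1, h2⟩ | ⟨h1, h2⟩
        · rw [h1] at hmax; linarith
        · rw [h1] at hmax; linarith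
      rw [abs_of_neg hyneg] at habs
      have : -(x - α * g) - α * η = -x := habs
      have : α * g = α * η := by linarith
      exact (mul_left_cancel₀ hα.ne' this)
    · refine ⟨fun h0 => absurd hx h0, fun _ => ?_⟩
      -- x = 0 : 0 = sign y * max(|y| - ν, 0) ⇒ |y| ≤ ν
      have hyle : |y| ≤ α * η := by
        by_contra hcon
        push_neg at hcon
        have hy0 : y ≠ 0 := by
          intro h0; rw [h0, abs_zero] at hcon; linarith
        have hmax : max (|y| - α * η) 0 = |y| - α * η := max_eq_left (by linarith)
        rw [hmax, hx] at h
        rcases lt_or_gt_of_ne hy0 with h1 | h1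
        · rw [Real.sign_of_neg h1] at h; nlinarith
        · rw [Real.sign_of_pos h1] at h; nlinarith
      have : |(-(α * g))| ≤ α * η := by
        have : y = -(α * g) := by rw [hy, hx]; ring
        rwa [← this]
      rw [abs_neg, abs_mul, abs_of_pos hα] at this
      have := (mul_le_mul_iff_right₀ hα).mp this
      exact this
    · refine ⟨fun _ => ?_, fun h0 => absurd h0.symm hx.ne⟩
      rw [Real.sign_of_pos hx, mul_one]
      have hypos : 0 < y := by
        by_contra hcon
        push_neg at hcon
        rcases eq_or_lt_of_le hcon with h1 | h1
        · rw [h1, Real.sign_zero, zero_mul] at h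
          exact absurd h.symm hx.ne
        · rw [Real.sign_of_neg h1] at h
          have := le_max_right (|y| - α * η) 0
          nlinarith
      rw [Real.sign_of_pos hypos, one_mul] at h
      have habs : |y| - α * η = x := by
        rcases max_cases (|y| - α * η) 0 with ⟨h1, h2⟩ | ⟨h1, h2⟩
        · rw [h1] at h; linarith
        · rw [h1] at h; linarith
      rw [abs_of_pos hypos] at habs
      have : α * g = -(α * η) := by rw [hy] at habs; linarith
      have : g = -η := by
        have h2 : α * g = α * (-η) := by linarith [this]
        exact mul_left_cancel₀ hα.ne' h2
      linarith
  · rintro ⟨hne, hze⟩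
    rcases lt_trichotomy x 0 with hx | hx | hx
    · have hg : g = η := by
        have := hne hx.ne
        rw [Real.sign_of_neg hx] at this; linarith
      have hyv : y = x - α * η := by rw [hy, hg]
      have hyneg : y < 0 := by nlinarith
      rw [Real.sign_of_neg hyneg, abs_of_neg hyneg, hyv]
      rw [max_eq_left (by nlinarith)]
      ring
    · have hg := hze hx
      have hyv : y = -(α * g) := by rw [hy, hx]; ring
      have habs : |y| ≤ α * η := by
        rw [hyv, abs_neg, abs_mul, abs_of_pos hα]
        exact mul_le_mul_of_nonneg_left hg hα.le
      rw [max_eq_right (by linarith), mul_zero, hx]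
    · have hg : g = -η := by
        have := hne hx.ne'
        rw [Real.sign_of_pos hx] at this; linarith
      have hyv : y = x + α * η := by rw [hy, hg]; ring
      have hypos : 0 < y := by nlinarith
      rw [Real.sign_of_pos hypos, abs_of_pos hypos, hyv]
      rw [max_eq_left (by nlinarith)]
      ring

theorem ist_min_iff_cond {k : ℕ}
    (J : EuclideanSpace ℝ (Fin k) → ℝ)
    (hJconv : ConvexOn ℝ Set.univ J) (hJdiff : Differentiable ℝ J)
    (η : ℝ) (hη : 0 < η)
    (F : EuclideanSpace ℝ (Fin k) → ℝ)
    (hF : F = fun θ => J θ + η * ∑ i, |θ i|)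
    (θstar : EuclideanSpace ℝ (Fin k)) :
    (∀ z, F θstar ≤ F z) ↔
      ∀ i, (θstar i ≠ 0 → gradient J θstar i = -η * Real.sign (θstar i)) ∧
        (θstar i = 0 → |gradient J θstar i| ≤ η) := by
  set g := gradient J θstar with hg
  constructor
  · intro hmin i
    set e : EuclideanSpace ℝ (Fin k) := EuclideanSpace.single i (1:ℝ) with he
    set φ : ℝ → ℝ := fun t => J (θstar + t • e) with hφdef
    have h00 : θstar + (0:ℝ) • e = θstar := by simp
    have hline : HasDerivAt (fun t : ℝ => θstar + t • e) e 0 := by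
      simpa using ((hasDerivAt_id (0:ℝ)).smul_const e).const_add θstar
    have hfd : HasFDerivAt J (toDual ℝ _ g) (θstar + (0:ℝ) • e) := by
      rw [h00]; exact hasGradientAt_iff_hasFDerivAt.mp (hJdiff θstar).hasGradientAt
    have hφ : HasDerivAt φ (g i) 0 := by
      have h2 := hfd.comp_hasDerivAt 0 hline
      have h3 : (toDual ℝ _ g) e = g i := by
        rw [toDual_apply_apply, he]
        simp [EuclideanSpace.inner_single_right]
      rw [h3] at h2
      exact h2
    -- componentwise values
    have happ : ∀ (t : ℝ) (j : Fin k), (θstar + t • e) j = θstar j + t * (if j = i then 1 else 0) := by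
      intro t j
      have : e j = if j = i then 1 else 0 := EuclideanSpace.single_apply i 1 j
      simp [this]
    set S : ℝ := ∑ j ∈ Finset.univ.erase i, |θstar j| with hS
    have hsum : ∀ t : ℝ, (∑ j, |(θstar + t • e) j|) = |θstar i + t| + S := by
      intro t
      rw [← Finset.add_sum_erase _ _ (Finset.mem_univ i)]
      congr 1
      · rw [happ t i]; simp
      · apply Finset.sum_congr rfl
        intro j hj
        rw [happ t j, if_neg (Finset.ne_of_mem_erase hj)]
        ring_nf
    have hsum0 : (∑ j, |θstar j|) = |θstar i| + S := by
      have := hsum 0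
      rw [h00] at this
      simpa using this
    have hψ : ∀ t : ℝ, φ 0 + η * |θstar i| ≤ φ t + η * |θstar i + t| := by
      intro t
      have h1 := hmin (θstar + t • e)
      rw [hF] at h1
      simp only at h1
      rw [hsum, hsum0] at h1
      have hφ0 : φ 0 = J θstar := by rw [hφdef]; simp [h00]
      rw [hφ0]
      nlinarith [h1]
    constructor
    · intro hzi
      have habs : HasDerivAt (fun t : ℝ => |θstar i + t|) ((SignType.sign (θstar i) : ℝ)) 0 := by
        have h2 : HasDerivAt (fun t : ℝ => θstar i + t) 1 0 := by
          simpa using (hasDerivAt_id (0:ℝ)).const_add (θstar i)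
        have h3 : HasDerivAt (|·|) ((SignType.sign (θstar i) : ℝ)) (θstar i + 0) := by
          rw [add_zero]; exact hasDerivAt_abs hzi
        have := h3.comp 0 h2
        simpa [Function.comp_def] using this
      have hψd : HasDerivAt (fun t => φ t + η * |θstar i + t|)
          (g i + η * (SignType.sign (θstar i) : ℝ)) 0 := hφ.add (habs.const_mul η)
      have hloc : IsLocalMin (fun t => φ t + η * |θstar i + t|) 0 := by
        apply Filter.Eventually.of_forall
        intro t
        simpa using hψ t
      have hzero := hloc.hasDerivAt_eq_zero hψd
      rcases lt_or_gt_of_ne hzi with hlt | hlt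
      · rw [Real.sign_of_neg hlt]
        rw [sign_neg hlt] at hzero
        norm_num at hzero ⊢
        linarith
      · rw [Real.sign_of_pos hlt]
        rw [sign_pos hlt] at hzero
        norm_num at hzero ⊢
        linarith
    · intro hzi
      have hψ' : ∀ t : ℝ, φ 0 ≤ φ t + η * |t| := by
        intro t
        have := hψ t
        rw [hzi] at this
        simpa using this
      have hslope := hasDerivAt_iff_tendsto_slope.mp hφ
      have hR : Filter.Tendsto (slope φ 0) (nhdsWithin 0 (Set.Ioi 0)) (nhds (g i)) :=
        hslope.mono_left (nhdsWithin_mono _ (fun t ht => ne_of_gt ht))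
      have hL : Filter.Tendsto (slope φ 0) (nhdsWithin 0 (Set.Iio 0)) (nhds (g i)) :=
        hslope.mono_left (nhdsWithin_mono _ (fun t ht => ne_of_lt ht))
      have h1 : -η ≤ g i := by
        apply ge_of_tendsto hR
        filter_upwards [self_mem_nhdsWithin] with t ht
        have ht' : (0:ℝ) < t := ht
        rw [slope_def_field]
        have := hψ' t
        rw [abs_of_pos ht'] at this
        rw [sub_zero, le_div_iff₀ ht']
        linarith
      have h2 : g i ≤ η := by
        apply le_of_tendsto hL
        filter_upwards [self_mem_nhdsWithin] with t ht
        have ht' : t < (0:ℝ) := ht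
        rw [slope_def_field]
        have := hψ' t
        rw [abs_of_neg ht'] at this
        rw [sub_zero, div_le_iff_of_neg ht']
        linarith
      exact abs_le.mpr ⟨h1, h2⟩
  · intro hC z
    have hgi : J θstar + inner ℝ g (z - θstar) ≤ J z := grad_ineq hJconv hJdiff θstar z
    have hinner : (inner ℝ g (z - θstar) : ℝ) = ∑ j, g j * (z j - θstar j) := by
      rw [PiLp.inner_apply]
      apply Finset.sum_congr rfl
      intro j _
      simp [PiLp.sub_apply, mul_comm]
    have hterm : ∀ j : Fin k, 0 ≤ g j * (z j - θstar j) + η * (|z j| - |θstar j|) := by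
      intro j
      rcases hC j with ⟨hne, hze⟩
      by_cases h0 : θstar j = 0
      · have hgb := hze h0
        rw [h0]
        have hb1 : |g j * z j| ≤ η * |z j| := by
          rw [abs_mul]
          exact mul_le_mul_of_nonneg_right hgb (abs_nonneg _)
        have := neg_abs_le (g j * z j)
        simp only [sub_zero, abs_zero]
        linarith
      · have hs := hne h0
        rcases lt_or_gt_of_ne h0 with hlt | hlt
        · rw [Real.sign_of_neg hlt] at hs
          rw [hs, abs_of_neg hlt]
          have := neg_abs_le (z j)
          nlinarith [hη.le]
        · rw [Real.sign_of_pos hlt] at hs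
          rw [hs, abs_of_pos hlt]
          have := le_abs_self (z j)
          nlinarith [hη.le]
    have hsum : 0 ≤ ∑ j, (g j * (z j - θstar j) + η * (|z j| - |θstar j|)) :=
      Finset.sum_nonneg fun j _ => hterm j
    rw [Finset.sum_add_distrib, ← Finset.mul_sum, Finset.sum_sub_distrib] at hsum
    rw [hF]
    simp only
    rw [hinner] at hgi
    nlinarith [hgi, hsum]


theorem ist_fixed_points_are_minimizers {k : ℕ}
    (J : EuclideanSpace ℝ (Fin k) → ℝ)
    (hJconv : ConvexOn ℝ Set.univ J) (hJdiff : Differentiable ℝ J)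
    (η : ℝ) (hη : 0 < η)
    (F : EuclideanSpace ℝ (Fin k) → ℝ)
    (hF : F = fun θ => J θ + η * ∑ i, |θ i|)
    (θstar : EuclideanSpace ℝ (Fin k)) :
    ((∀ z, F θstar ≤ F z) ↔
        ∀ α : ℝ, 0 < α → θstar = softThreshVec (α * η) (θstar - α • gradient J θstar)) ∧
      ((∀ z, F θstar ≤ F z) ↔
        ∃ α : ℝ, 0 < α ∧ θstar = softThreshVec (α * η) (θstar - α • gradient J θstar)) := by
  have hC : ∀ α : ℝ, 0 < α →
      ((θstar = softThreshVec (α * η) (θstar - α • gradient J θstar)) ↔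
        ∀ i, (θstar i ≠ 0 → gradient J θstar i = -η * Real.sign (θstar i)) ∧
          (θstar i = 0 → |gradient J θstar i| ≤ η)) := by
    intro α hα
    rw [← (WithLp.ofLp_injective 2).eq_iff, funext_iff]
    apply forall_congr'
    intro i
    have happ : (θstar - α • gradient J θstar) i = θstar i - α * gradient J θstar i := by
      simp [PiLp.sub_apply, PiLp.smul_apply]
    rw [show softThreshVec (α * η) (θstar - α • gradient J θstar) i
        = softThresh (α * η) ((θstar - α • gradient J θstar) i) from rfl, happ]
    exact softThresh_fixed_iff hα hη
  have hM := ist_min_iff_cond J hJconv hJdiff η hη F hF θstar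
  exact ⟨⟨fun hmin α hα => (hC α hα).mpr (hM.mp hmin),
      fun h => hM.mpr ((hC 1 one_pos).mp (h 1 one_pos))⟩,
    ⟨fun hmin => ⟨1, one_pos, (hC 1 one_pos).mpr (hM.mp hmin)⟩,
      fun ⟨α, hα, h⟩ => hM.mpr ((hC α hα).mp h)⟩⟩
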